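/- arXiv:1905.08131 — 2 statements merged into one kernel-verified Lean document; each statement's English description precedes it below -/
import Mathlib

section
/- If the lower Rényi entropy satisfies 0 < H̲₂(μ), then for ν⊗ν-almost every pair ((ω,x),(ω̃,y)), limsup_{n→∞} M_n(x,y)/log n ≤ 2/H̲₂(μ). -/
open MeasureTheory Filter ProbabilityTheory Set

open Topology
open scoped ENNReal NNReal

noncomputable section

/-- The one-sided shift on `ℕ`-indexed sequences. -/
def shiftN {A : Type*} (x : ℕ → A) : ℕ → A := fun n => x (n + 1)

/-- The `k`-cylinder determined by the word `w`. -/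
def cyl {A : Type*} (k : ℕ) (w : Fin k → A) : Set (ℕ → A) := {x | ∀ i : Fin k, x (i : ℕ) = w i}

/-- Membership in the σ-algebra `F₀ⁿ(X)` generated by the `n`-cylinders:
the sets determined by the first `n` coordinates. -/
def cylAlg {A : Type*} (n : ℕ) (B : Set (ℕ → A)) : Prop :=
  ∃ s : Set (Fin n → A), B = {x | (fun i : Fin n => x (i : ℕ)) ∈ s}

/-- Length of the longest common substring of `x` and `y` within the first `n` symbols:
`M_n(x,y) = max{m : x_{i+k} = y_{j+k}, k = 1,…,m, for some 0 ≤ i,j ≤ n-m}`. -/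
def Mstat {A : Type*} (x y : ℕ → A) (n : ℕ) : ℕ :=
  sSup {m | ∃ i j : ℕ, i + m ≤ n ∧ j + m ≤ n ∧ ∀ k, 1 ≤ k → k ≤ m → x (i + k) = y (j + k)}

/-- Lower Rényi entropy `H̲₂(μ) = liminf_k (-1/k) log Σ_{C_k} μ(C_k)²`. -/
def H2low (N : ℕ) (μ : Measure (ℕ → Fin N)) : ℝ :=
  liminf (fun k : ℕ =>
    Real.log (∑ w : Fin k → Fin N, (μ (cyl k w)).toReal ^ 2) / (-(k : ℝ))) atTop

/-- Upper Rényi entropy `H̄₂(μ) = limsup_k (-1/k) log Σ_{C_k} μ(C_k)²`. -/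
def H2up (N : ℕ) (μ : Measure (ℕ → Fin N)) : ℝ :=
  limsup (fun k : ℕ =>
    Real.log (∑ w : Fin k → Fin N, (μ (cyl k w)).toReal ^ 2) / (-(k : ℝ))) atTop

/-- `h₀ = liminf_k (-1/k) log ∫_Ω max_{C_k} μ_ω(C_k) dℙ`. -/
def h0lim {Ω : Type*} [MeasurableSpace Ω] (N : ℕ) (P : Measure Ω)
    (κ : Kernel Ω (ℕ → Fin N)) : ℝ :=
  liminf (fun k : ℕ =>
    Real.log (∫ ω, (⨆ w : Fin k → Fin N, ((κ ω) (cyl k w)).toReal) ∂P) / (-(k : ℝ))) atTop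

lemma measurable_shiftN {A : Type*} [MeasurableSpace A] : Measurable (shiftN (A := A)) :=
  measurable_pi_lambda _ (fun n => measurable_pi_apply (n + 1))

lemma shiftN_iterate {A : Type*} (x : ℕ → A) (r n : ℕ) : (shiftN^[r] x) n = x (n + r) := by
  induction r generalizing x n with
  | zero => simp
  | succ r ih =>
    rw [Function.iterate_succ_apply]
    rw [ih (shiftN x) n]
    simp [shiftN]; ring_nf

lemma measurableSet_cyl {A : Type*} [MeasurableSpace A] [MeasurableSingletonClass A]
    (k : ℕ) (w : Fin k → A) : MeasurableSet (cyl k w) := by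
  have : cyl k w = ⋂ i : Fin k, (fun x : ℕ → A => x (i : ℕ)) ⁻¹' {w i} := by
    ext x; simp [cyl]
  rw [this]
  exact MeasurableSet.iInter fun i => (measurable_pi_apply _) (measurableSet_singleton _)

-- disjointness of cylinders
lemma cyl_disjoint {A : Type*} {k : ℕ} {w w' : Fin k → A} (h : w ≠ w') :
    Disjoint (cyl k w) (cyl k w') := by
  rw [Set.disjoint_left]
  intro x hx hx'
  exact h (funext fun i => (hx i).symm.trans (hx' i))

lemma Mstat_bddAbove {A : Type*} (x y : ℕ → A) (n : ℕ) :
    BddAbove {m | ∃ i j : ℕ, i + m ≤ n ∧ j + m ≤ n ∧ ∀ k, 1 ≤ k → k ≤ m → x (i + k) = y (j + k)} := by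
  refine ⟨n, fun m hm => ?_⟩
  obtain ⟨i, j, hi, _, _⟩ := hm
  omega

lemma Mstat_nonempty {A : Type*} (x y : ℕ → A) (n : ℕ) :
    Set.Nonempty {m | ∃ i j : ℕ, i + m ≤ n ∧ j + m ≤ n ∧ ∀ k, 1 ≤ k → k ≤ m → x (i + k) = y (j + k)} :=
  ⟨0, 0, 0, by omega, by omega, fun k hk hk' => by omega⟩


lemma Mstat_witness {A : Type*} {x y : ℕ → A} {n m : ℕ} (h : m ≤ Mstat x y n) :
    ∃ i j : ℕ, i + m ≤ n ∧ j + m ≤ n ∧ ∀ k, 1 ≤ k → k ≤ m → x (i + k) = y (j + k) := by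
  unfold Mstat at h
  have hmem := Nat.sSup_mem (Mstat_nonempty x y n) (Mstat_bddAbove x y n)
  obtain ⟨i, j, hi, hj, hmatch⟩ := hmem
  exact ⟨i, j, by omega, by omega, fun k hk hk' => hmatch k hk (by omega)⟩

lemma Mstat_mono {A : Type*} (x y : ℕ → A) {n n' : ℕ} (h : n ≤ n') :
    Mstat x y n ≤ Mstat x y n' := by
  apply csSup_le_csSup (Mstat_bddAbove x y n') (Mstat_nonempty x y n)
  rintro m ⟨i, j, hi, hj, hm⟩
  exact ⟨i, j, by omega, by omega, hm⟩

lemma prod_Mstat_bound {N : ℕ} (μ : Measure (ℕ → Fin N)) [SFinite μ]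
    (hinv : ∀ (r : ℕ) (s : Set (ℕ → Fin N)), MeasurableSet s → μ (shiftN^[r] ⁻¹' s) = μ s)
    (n m : ℕ) :
    μ.prod μ {p : (ℕ → Fin N) × (ℕ → Fin N) | m ≤ Mstat p.1 p.2 n}
      ≤ ((n : ℝ≥0∞) + 1) ^ 2 * ∑ w : Fin m → Fin N, μ (cyl m w) ^ 2 := by
  set pre : ℕ → (Fin m → Fin N) → Set (ℕ → Fin N) :=
    fun i w => shiftN^[i + 1] ⁻¹' cyl m w with hpre
  have hsub : {p : (ℕ → Fin N) × (ℕ → Fin N) | m ≤ Mstat p.1 p.2 n} ⊆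
      ⋃ i ∈ Finset.range (n + 1), ⋃ j ∈ Finset.range (n + 1),
        ⋃ w : Fin m → Fin N, (pre i w) ×ˢ (pre j w) := by
    rintro ⟨x, y⟩ hp
    obtain ⟨i, j, hi, hj, hmatch⟩ := Mstat_witness hp
    simp only [Set.mem_iUnion, Finset.mem_range]
    refine ⟨i, by omega, j, by omega, fun t => x (i + 1 + t), ?_, ?_⟩
    · intro t
      rw [shiftN_iterate]
      show x ((t : ℕ) + (i + 1)) = x (i + 1 + (t : ℕ))
      congr 1; omega
    · intro t
      rw [shiftN_iterate]
      show y ((t : ℕ) + (j + 1)) = x (i + 1 + (t : ℕ))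
      have h1 : (t : ℕ) + (j + 1) = j + ((t : ℕ) + 1) := by omega
      have h2 : i + 1 + (t : ℕ) = i + ((t : ℕ) + 1) := by omega
      rw [h1, h2]
      exact (hmatch ((t : ℕ) + 1) (by omega) (by omega)).symm
  refine (measure_mono hsub).trans ?_
  refine (measure_biUnion_finset_le _ _).trans ?_
  have hbound : ∀ i ∈ Finset.range (n + 1),
      μ.prod μ (⋃ j ∈ Finset.range (n + 1), ⋃ w : Fin m → Fin N, (pre i w) ×ˢ (pre j w))
        ≤ (n + 1 : ℝ≥0∞) * ∑ w : Fin m → Fin N, μ (cyl m w) ^ 2 := by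
    intro i _
    refine (measure_biUnion_finset_le _ _).trans ?_
    have hb2 : ∀ j ∈ Finset.range (n + 1),
        μ.prod μ (⋃ w : Fin m → Fin N, (pre i w) ×ˢ (pre j w))
          ≤ ∑ w : Fin m → Fin N, μ (cyl m w) ^ 2 := by
      intro j _
      refine (measure_iUnion_fintype_le _ _).trans ?_
      refine Finset.sum_le_sum fun w _ => ?_
      rw [Measure.prod_prod, hinv _ _ (measurableSet_cyl m w), hinv _ _ (measurableSet_cyl m w),
        sq]
    refine (Finset.sum_le_sum hb2).trans ?_
    rw [Finset.sum_const, Finset.card_range, nsmul_eq_mul]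
    push_cast
    exact le_rfl
  refine (Finset.sum_le_sum hbound).trans ?_
  rw [Finset.sum_const, Finset.card_range, nsmul_eq_mul, sq, mul_assoc]
  push_cast
  exact le_rfl

lemma sum_cyl_le_one {N : ℕ} (μ : Measure (ℕ → Fin N)) [IsProbabilityMeasure μ] (k : ℕ) :
    ∑ w : Fin k → Fin N, μ (cyl k w) ≤ 1 := by
  have hdisj : (↑(Finset.univ : Finset (Fin k → Fin N)) : Set (Fin k → Fin N)).PairwiseDisjoint
      (cyl k) := fun w _ w' _ h => cyl_disjoint h
  rw [← measure_biUnion_finset hdisj (fun w _ => measurableSet_cyl k w)]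
  exact measure_mono (Set.subset_univ _) |>.trans_eq measure_univ

lemma sum_sq_eq_ofReal {N : ℕ} (μ : Measure (ℕ → Fin N)) [IsFiniteMeasure μ] (k : ℕ) :
    ∑ w : Fin k → Fin N, μ (cyl k w) ^ 2
      = ENNReal.ofReal (∑ w : Fin k → Fin N, (μ (cyl k w)).toReal ^ 2) := by
  rw [ENNReal.ofReal_sum_of_nonneg (fun w _ => by positivity)]
  refine Finset.sum_congr rfl fun w _ => ?_
  rw [ENNReal.ofReal_pow ENNReal.toReal_nonneg, ENNReal.ofReal_toReal (measure_ne_top μ _)]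

lemma sum_sq_le_one {N : ℕ} (μ : Measure (ℕ → Fin N)) [IsProbabilityMeasure μ] (k : ℕ) :
    ∑ w : Fin k → Fin N, (μ (cyl k w)).toReal ^ 2 ≤ 1 := by
  have h1 : ∑ w : Fin k → Fin N, (μ (cyl k w)).toReal ^ 2
      ≤ ∑ w : Fin k → Fin N, (μ (cyl k w)).toReal := by
    refine Finset.sum_le_sum fun w _ => ?_
    have h2 : (μ (cyl k w)).toReal ≤ 1 := by
      apply ENNReal.toReal_le_of_le_ofReal one_pos.le
      simpa using prob_le_one
    nlinarith [ENNReal.toReal_nonneg (a := μ (cyl k w))]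
  refine h1.trans ?_
  have := sum_cyl_le_one μ k
  calc ∑ w : Fin k → Fin N, (μ (cyl k w)).toReal
      = (∑ w : Fin k → Fin N, μ (cyl k w)).toReal := by
        rw [ENNReal.toReal_sum (fun w _ => measure_ne_top μ _)]
    _ ≤ (1 : ℝ≥0∞).toReal := ENNReal.toReal_mono ENNReal.one_ne_top this
    _ = 1 := by simp



lemma key_ae {N : ℕ} (μ : Measure (ℕ → Fin N)) [IsProbabilityMeasure μ]
    (hinv : ∀ (r : ℕ) (s : Set (ℕ → Fin N)), MeasurableSet s → μ (shiftN^[r] ⁻¹' s) = μ s)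
    (hpos : 0 < H2low N μ) {ε : ℝ} (hε : 0 < ε) :
    ∀ᵐ p ∂μ.prod μ,
      limsup (fun n : ℕ => (Mstat p.1 p.2 n : ℝ) / Real.log n) atTop
        ≤ (1 + ε) * (2 / H2low N μ) := by
  set H := H2low N μ with hHdef
  set Sr : ℕ → ℝ := fun k => ∑ w : Fin k → Fin N, (μ (cyl k w)).toReal ^ 2 with hSr
  set a : ℕ → ℝ := fun k => Real.log (Sr k) / (-(k : ℝ)) with ha
  have hlim : H = liminf a atTop := rfl
  -- nonnegativity of a
  have hSr_nonneg : ∀ k, 0 ≤ Sr k := fun k => Finset.sum_nonneg fun w _ => by positivity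
  have hSr_le_one : ∀ k, Sr k ≤ 1 := fun k => sum_sq_le_one μ k
  have ha_nonneg : ∀ k, 0 ≤ a k := by
    intro k
    rcases Nat.eq_zero_or_pos k with hk | hk
    · subst hk; simp [ha]
    · have hlog : Real.log (Sr k) ≤ 0 := Real.log_nonpos (hSr_nonneg k) (hSr_le_one k)
      exact div_nonneg_of_nonpos hlog (by simp)
  have hH : 0 < H := hpos
  set b : ℝ := H * (2 + ε) / (2 * (1 + ε)) with hbdef
  have hb_pos : 0 < b := by
    apply div_pos (mul_pos hH (by linarith)) (by linarith)
  have hbH : b < H := by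
    rw [hbdef, div_lt_iff₀ (by linarith)]
    nlinarith
  set α : ℝ := (1 + ε) * (2 / H) with hαdef
  have hα_pos : 0 < α := by positivity
  have hαb : α * b = 2 + ε := by
    rw [hαdef, hbdef]
    field_simp
  have hbdd : IsBoundedUnder (· ≥ ·) atTop a :=
    isBoundedUnder_of ⟨0, fun k => ha_nonneg k⟩
  have hev : ∀ᶠ k in atTop, b < a k :=
    eventually_lt_of_lt_liminf (by rw [← hlim]; exact hbH) hbdd
  obtain ⟨K, hK⟩ := eventually_atTop.mp hev
  have hSrK : ∀ k, K ≤ k → 1 ≤ k → Sr k ≤ Real.exp (-(k : ℝ) * b) := by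
    intro k hKk h1k
    have hak := hK k hKk
    have hkpos : (0 : ℝ) < k := by exact_mod_cast h1k
    have hlt : Real.log (Sr k) < -(k : ℝ) * b := by
      have h2 : Real.log (Sr k) < b * (-(k : ℝ)) :=
        ((lt_div_iff_of_neg (by linarith)).mp hak)
      linarith [h2]
    rcases eq_or_lt_of_le (hSr_nonneg k) with h0 | h0
    · rw [← h0]; positivity
    · calc Sr k = Real.exp (Real.log (Sr k)) := (Real.exp_log h0).symm
        _ ≤ Real.exp (-(k : ℝ) * b) := Real.exp_le_exp.mpr hlt.le
  set K₁ : ℕ := max K 1 with hK₁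
  have hlog2 : 0 < Real.log 2 := Real.log_pos one_lt_two
  set m : ℕ → ℕ := fun t => ⌊α * (t * Real.log 2)⌋₊ + 1 with hm
  have hm_lb : ∀ t : ℕ, α * (t * Real.log 2) < m t := by
    intro t
    have := Nat.lt_floor_add_one (α * (t * Real.log 2))
    rw [hm]
    push_cast
    exact this
  set T₀ : ℕ := ⌈(K₁ : ℝ) / (α * Real.log 2)⌉₊ with hT₀
  have hmK : ∀ s : ℕ, T₀ ≤ s → K₁ ≤ m s := by
    intro s hs
    have h1 : (K₁ : ℝ) / (α * Real.log 2) ≤ (s : ℝ) :=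
      (Nat.le_ceil _).trans (by exact_mod_cast hs)
    have h2 : (K₁ : ℝ) ≤ α * (s * Real.log 2) := by
      rw [div_le_iff₀ (by positivity)] at h1
      nlinarith
    have h3 : (K₁ : ℝ) < (m s : ℝ) := h2.trans_lt (hm_lb s)
    exact_mod_cast h3.le
  set r : ℝ := Real.exp (-(ε * Real.log 2)) with hr
  have hr_pos : 0 < r := Real.exp_pos _
  have hr_lt : r < 1 := Real.exp_lt_one_iff.mpr (by nlinarith)
  -- the central estimate
  have hBs : ∀ s : ℕ, T₀ ≤ s →
      μ.prod μ {p : (ℕ → Fin N) × (ℕ → Fin N) | m s ≤ Mstat p.1 p.2 (2 ^ (s + 1))}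
        ≤ ENNReal.ofReal (16 * r ^ s) := by
    intro s hs
    refine (prod_Mstat_bound μ hinv (2 ^ (s + 1)) (m s)).trans ?_
    rw [show ∑ w : Fin (m s) → Fin N, μ (cyl (m s) w) ^ 2
        = ENNReal.ofReal (Sr (m s)) from sum_sq_eq_ofReal μ (m s)]
    have hcast : (((2 ^ (s + 1) : ℕ) : ℝ≥0∞) + 1) ^ 2
        = ENNReal.ofReal ((((2 ^ (s + 1) + 1) ^ 2 : ℕ) : ℝ)) := by
      rw [ENNReal.ofReal_natCast]
      push_cast
      ring
    rw [hcast, ← ENNReal.ofReal_mul (by positivity)]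
    apply ENNReal.ofReal_le_ofReal
    -- now a real inequality
    have hKm : K ≤ m s := le_trans (le_max_left K 1) (hmK s hs)
    have h1m : 1 ≤ m s := le_trans (le_max_right K 1) (hmK s hs)
    have hSrm : Sr (m s) ≤ Real.exp (-((m s : ℝ)) * b) := hSrK (m s) hKm h1m
    have hexp1 : Real.exp (-((m s : ℝ)) * b) ≤ Real.exp (-((2 + ε) * (s * Real.log 2))) := by
      apply Real.exp_le_exp.mpr
      have h4 : α * (s * Real.log 2) * b ≤ (m s : ℝ) * b :=
        mul_le_mul_of_nonneg_right (hm_lb s).le hb_pos.le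
      have h5 : α * ((s : ℝ) * Real.log 2) * b = (2 + ε) * ((s : ℝ) * Real.log 2) := by
        rw [← hαb]; ring
      linarith
    have hc : (((2 ^ (s + 1) + 1) ^ 2 : ℕ) : ℝ) ≤ (2 : ℝ) ^ (2 * s + 4) := by
      have hn : ((2 ^ (s + 1) + 1) ^ 2 : ℕ) ≤ 2 ^ (2 * s + 4) := by
        have h5 : (2 ^ (s + 1) + 1 : ℕ) ≤ 2 ^ (s + 2) := by
          have := Nat.one_le_two_pow (n := s + 1)
          rw [pow_succ 2 (s + 1)]
          omega
        calc ((2 ^ (s + 1) + 1) ^ 2 : ℕ) ≤ (2 ^ (s + 2)) ^ 2 :=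
              Nat.pow_le_pow_left h5 2
          _ = 2 ^ (2 * s + 4) := by rw [← pow_mul]; ring_nf
      exact_mod_cast hn
    have e1 : (2 : ℝ) ^ (2 * s + 4) = 16 * 4 ^ s := by
      rw [pow_add, pow_mul]
      norm_num
      ring
    have e2 : Real.exp (-((2 + ε) * ((s : ℝ) * Real.log 2))) = (4⁻¹ * r) ^ s := by
      have h6 : -((2 + ε) * ((s : ℝ) * Real.log 2)) = (s : ℝ) * (-((2 + ε) * Real.log 2)) := by
        ring
      rw [h6, Real.exp_nat_mul]
      congr 1
      have h7 : -((2 + ε) * Real.log 2) = -(2 * Real.log 2) + -(ε * Real.log 2) := by ring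
      rw [h7, Real.exp_add, ← hr]
      congr 1
      rw [Real.exp_neg]
      have h8 : (2 : ℝ) * Real.log 2 = Real.log 4 := by
        rw [show (4 : ℝ) = 2 ^ (2 : ℕ) by norm_num, Real.log_pow]
        push_cast; ring
      rw [h8, Real.exp_log (by norm_num)]
    calc (((2 ^ (s + 1) + 1) ^ 2 : ℕ) : ℝ) * Sr (m s)
        ≤ (2 : ℝ) ^ (2 * s + 4) * Real.exp (-((2 + ε) * ((s : ℝ) * Real.log 2))) := by
          apply mul_le_mul hc (hSrm.trans hexp1) (hSr_nonneg _) (by positivity)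
      _ = 16 * 4 ^ s * ((4⁻¹ * r) ^ s) := by rw [e1, e2]
      _ = 16 * r ^ s := by
          rw [mul_pow, mul_assoc, ← mul_assoc ((4 : ℝ) ^ s), ← mul_pow]
          norm_num
  -- Borel–Cantelli
  set B : ℕ → Set ((ℕ → Fin N) × (ℕ → Fin N)) :=
    fun t => {p | m (t + T₀) ≤ Mstat p.1 p.2 (2 ^ (t + T₀ + 1))} with hBdef
  have hq : ENNReal.ofReal r < 1 := by
    rw [← ENNReal.ofReal_one]
    exact (ENNReal.ofReal_lt_ofReal_iff one_pos).mpr hr_lt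
  have htsum : (∑' t, μ.prod μ (B t)) ≠ ⊤ := by
    have hle : ∀ t : ℕ, μ.prod μ (B t) ≤ ENNReal.ofReal 16 * ENNReal.ofReal r ^ t := by
      intro t
      refine (hBs (t + T₀) (by omega)).trans ?_
      rw [ENNReal.ofReal_mul (by norm_num), ENNReal.ofReal_pow hr_pos.le]
      refine mul_le_mul_right ?_ _
      calc ENNReal.ofReal r ^ (t + T₀) = ENNReal.ofReal r ^ t * ENNReal.ofReal r ^ T₀ :=
            pow_add _ _ _
        _ ≤ ENNReal.ofReal r ^ t * 1 := mul_le_mul_right (pow_le_one' hq.le T₀) _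
        _ = ENNReal.ofReal r ^ t := mul_one _
    refine ne_top_of_le_ne_top ?_ (ENNReal.tsum_le_tsum hle)
    rw [ENNReal.tsum_mul_left, ENNReal.tsum_geometric]
    refine ENNReal.mul_ne_top ENNReal.ofReal_ne_top (ENNReal.inv_ne_top.mpr ?_)
    rw [ne_eq, tsub_eq_zero_iff_le]
    exact not_le.mpr hq
  have hae := MeasureTheory.ae_eventually_notMem htsum
  filter_upwards [hae] with p hp
  obtain ⟨T, hT⟩ := eventually_atTop.mp hp
  have hdet : ∀ s : ℕ, T + T₀ ≤ s → Mstat p.1 p.2 (2 ^ (s + 1)) < m s := by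
    intro s hsT
    have hmem := hT (s - T₀) (by omega)
    simp only [hBdef, Set.mem_setOf_eq] at hmem
    have heq : s - T₀ + T₀ = s := by omega
    rw [heq] at hmem
    omega
  have hfn : ∀ n : ℕ, 2 ^ (T + T₀) ≤ n → 2 ≤ n →
      (Mstat p.1 p.2 n : ℝ) / Real.log n ≤ α := by
    intro n h1 h2
    set t := Nat.log 2 n with ht
    have htT : T + T₀ ≤ t := by
      have hmono := Nat.log_mono_right (b := 2) h1
      rwa [Nat.log_pow one_lt_two] at hmono
    have hn_lt : n < 2 ^ (t + 1) := Nat.lt_pow_succ_log_self (by norm_num) n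
    have hMn : Mstat p.1 p.2 n < m t :=
      lt_of_le_of_lt (Mstat_mono _ _ hn_lt.le) (hdet t htT)
    have hM2 : Mstat p.1 p.2 n ≤ ⌊α * (t * Real.log 2)⌋₊ := by
      simp only [hm] at hMn; omega
    have hM3 : (Mstat p.1 p.2 n : ℝ) ≤ α * (t * Real.log 2) := by
      calc (Mstat p.1 p.2 n : ℝ) ≤ (⌊α * (t * Real.log 2)⌋₊ : ℝ) := by exact_mod_cast hM2
        _ ≤ α * (t * Real.log 2) := Nat.floor_le (by positivity)
    have hlogn : (t : ℝ) * Real.log 2 ≤ Real.log n := by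
      have hpow : (2 : ℝ) ^ t ≤ (n : ℝ) := by
        exact_mod_cast Nat.pow_log_le_self 2 (by omega)
      have := Real.log_le_log (by positivity) hpow
      rwa [Real.log_pow] at this
    have hMle : (Mstat p.1 p.2 n : ℝ) ≤ α * Real.log n := by
      refine hM3.trans ?_
      have := mul_le_mul_of_nonneg_left hlogn hα_pos.le
      linarith
    rw [div_le_iff₀ (Real.log_pos (by exact_mod_cast h2))]
    linarith
  have hco : IsCoboundedUnder (· ≤ ·) atTop
      (fun n : ℕ => (Mstat p.1 p.2 n : ℝ) / Real.log n) :=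
    IsBoundedUnder.isCoboundedUnder_le
      (isBoundedUnder_of ⟨0, fun n => div_nonneg (Nat.cast_nonneg _) (Real.log_natCast_nonneg n)⟩)
  refine limsup_le_of_le hco ?_
  rw [eventually_atTop]
  exact ⟨max (2 ^ (T + T₀)) 2, fun n hn =>
    hfn n (le_trans (le_max_left _ _) hn) (le_trans (le_max_right _ _) hn)⟩


/-- Annealed upper bound: if `0 < H̲₂(μ)`, then for `ν⊗ν`-a.e. pair
`((ω,x),(ω̃,y))`, `limsup_n M_n(x,y)/log n ≤ 2/H̲₂(μ)`, where `ν = ℙ ⊗ₘ κ` is an `S`-invariant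
probability measure with marginal `ℙ` and disintegration `(μ_ω) = κ`, and
`μ = ∫ μ_ω dℙ` is the marginal of `ν` on `X`. -/
theorem annealed_upper_bound
    {Ω : Type*} [MeasurableSpace Ω] {N : ℕ}
    (P : Measure Ω) [IsProbabilityMeasure P]
    (θ : Ω ≃ᵐ Ω) (hθ : Ergodic θ P)
    (κ : Kernel Ω (ℕ → Fin N)) [IsMarkovKernel κ]
    (hSinv : (P ⊗ₘ κ).map (fun p : Ω × (ℕ → Fin N) => (θ p.1, shiftN p.2)) = P ⊗ₘ κ)
    (μ : Measure (ℕ → Fin N)) (hμ : μ = (P ⊗ₘ κ).map Prod.snd)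
    (hpos : 0 < H2low N μ) :
    ∀ᵐ q ∂(P ⊗ₘ κ).prod (P ⊗ₘ κ),
      limsup (fun n : ℕ => (Mstat q.1.2 q.2.2 n : ℝ) / Real.log n) atTop ≤ 2 / H2low N μ := by
  have hμprob : IsProbabilityMeasure μ := by
    rw [hμ]; exact Measure.isProbabilityMeasure_map measurable_snd.aemeasurable
  have hSmeas : Measurable (fun p : Ω × (ℕ → Fin N) => (θ p.1, shiftN p.2)) :=
    (θ.measurable.comp measurable_fst).prodMk (measurable_shiftN.comp measurable_snd)
  have h1 : μ.map shiftN = μ := by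
    rw [hμ, Measure.map_map measurable_shiftN measurable_snd,
      show (shiftN ∘ Prod.snd : Ω × (ℕ → Fin N) → ℕ → Fin N)
        = Prod.snd ∘ (fun p : Ω × (ℕ → Fin N) => (θ p.1, shiftN p.2)) from rfl,
      ← Measure.map_map measurable_snd hSmeas, hSinv]
  have hiter : ∀ r : ℕ, μ.map (shiftN^[r]) = μ := by
    intro r
    induction r with
    | zero => simp
    | succ r ih =>
      rw [Function.iterate_succ, ← Measure.map_map (measurable_shiftN.iterate r)
        measurable_shiftN, h1, ih]
  have hinv : ∀ (r : ℕ) (s : Set (ℕ → Fin N)), MeasurableSet s →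
      μ (shiftN^[r] ⁻¹' s) = μ s := by
    intro r s hs
    rw [← Measure.map_apply (measurable_shiftN.iterate r) hs, hiter]
  -- a.e. statement over μ.prod μ
  have hall : ∀ᵐ p ∂μ.prod μ,
      limsup (fun n : ℕ => (Mstat p.1 p.2 n : ℝ) / Real.log n) atTop ≤ 2 / H2low N μ := by
    have hj : ∀ j : ℕ, ∀ᵐ p ∂μ.prod μ,
        limsup (fun n : ℕ => (Mstat p.1 p.2 n : ℝ) / Real.log n) atTop
          ≤ (1 + 1 / ((j : ℝ) + 1)) * (2 / H2low N μ) :=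
      fun j => key_ae μ hinv hpos (by positivity)
    filter_upwards [ae_all_iff.mpr hj] with p hp
    have htends : Tendsto (fun j : ℕ => (1 + 1 / ((j : ℝ) + 1)) * (2 / H2low N μ)) atTop
        (𝓝 (2 / H2low N μ)) := by
      have h0 : Tendsto (fun j : ℕ => 1 / ((j : ℝ) + 1)) atTop (𝓝 0) :=
        tendsto_one_div_add_atTop_nhds_zero_nat
      have h1' : Tendsto (fun j : ℕ => (1 : ℝ) + 1 / ((j : ℝ) + 1)) atTop (𝓝 (1 + 0)) :=
        tendsto_const_nhds.add h0
      have h2' := h1'.mul (tendsto_const_nhds (x := 2 / H2low N μ) (f := atTop (α := ℕ)))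
      norm_num at h2'
      simpa [one_div] using h2'
    exact ge_of_tendsto' htends hp
  -- transfer along the projection
  have hmap : ((P ⊗ₘ κ).prod (P ⊗ₘ κ)).map
      (Prod.map (Prod.snd : Ω × (ℕ → Fin N) → ℕ → Fin N) Prod.snd) = μ.prod μ := by
    rw [hμ]
    exact (Measure.map_prod_map _ _ measurable_snd measurable_snd).symm
  have := MeasureTheory.ae_of_ae_map
    (f := Prod.map (Prod.snd : Ω × (ℕ → Fin N) → ℕ → Fin N) Prod.snd)
    (measurable_snd.prodMap measurable_snd).aemeasurable (by rw [hmap]; exact hall)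
  exact this
end
end

section
/- Under hypotheses (I-a) and (II), for all k ≥ 1, g ≥ 1, indices i < j < i' < j' with j−i > g+k, i'−j > g+k and j'−i' > g+k, and any two k-cylinders C and C': ∫_Ω μ_{θ^i ω}(C)·μ_{θ^j ω}(C)·μ_{θ^{i'} ω}(C')·μ_{θ^{j'} ω}(C') dℙ(ω) ≤ 2α(g)² + 6α(g) + μ(C)²·μ(C')². -/
open MeasureTheory Filter ProbabilityTheory Set

noncomputable section

/-- The marginal measure `μ = ∫_Ω μ_ω dℙ`, evaluated (as a real number) on a set. -/
def muBar {Ω X : Type*} [MeasurableSpace Ω] [MeasurableSpace X]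
    (P : Measure Ω) (κ : Kernel Ω X) (B : Set X) : ℝ :=
  ∫ ω, ((κ ω) B).toReal ∂P

lemma shiftN_iterate_apply {A : Type*} (p : ℕ) (x : ℕ → A) (n : ℕ) :
    (shiftN^[p]) x n = x (n + p) := by
  induction p generalizing x with
  | zero => simp
  | succ q ih =>
      rw [Function.iterate_succ_apply, ih]
      rfl

lemma measurable_shiftN_iterate {A : Type*} [MeasurableSpace A] (p : ℕ) :
    Measurable (shiftN^[p] : (ℕ → A) → (ℕ → A)) := by
  have h : (shiftN^[p] : (ℕ → A) → (ℕ → A)) = fun x n => x (n + p) := by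
    funext x n; exact shiftN_iterate_apply p x n
  rw [h]
  exact measurable_pi_lambda _ fun n => measurable_pi_apply (n + p)

lemma cylAlg_cyl {A : Type*} {k n : ℕ} (w : Fin k → A) (h : k ≤ n) : cylAlg n (cyl k w) := by
  refine ⟨{v | ∀ i : Fin k, v ⟨i, lt_of_lt_of_le i.2 h⟩ = w i}, ?_⟩
  ext x; simp [cyl]

lemma cylAlg_mono {A : Type*} {n n' : ℕ} {B : Set (ℕ → A)} (h : cylAlg n B) (hn : n ≤ n') :
    cylAlg n' B := by
  obtain ⟨s, rfl⟩ := h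
  refine ⟨{v | (fun i : Fin n => v ⟨i, lt_of_lt_of_le i.2 hn⟩) ∈ s}, ?_⟩
  ext x; simp

lemma cylAlg_inter {A : Type*} {n : ℕ} {B B' : Set (ℕ → A)} (h : cylAlg n B)
    (h' : cylAlg n B') : cylAlg n (B ∩ B') := by
  obtain ⟨s, rfl⟩ := h; obtain ⟨s', rfl⟩ := h'
  exact ⟨s ∩ s', rfl⟩

lemma cylAlg_shift {A : Type*} {m : ℕ} (p : ℕ) {B : Set (ℕ → A)} (h : cylAlg m B) :
    cylAlg (p + m) (shiftN^[p] ⁻¹' B) := by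
  obtain ⟨s, rfl⟩ := h
  refine ⟨{v : Fin (p + m) → A | (fun i : Fin m => v ⟨p + i, by omega⟩) ∈ s}, ?_⟩
  ext x
  have hfun : (fun i : Fin m => (shiftN^[p] x) (i : ℕ)) = fun i : Fin m => x (p + i) := by
    funext i; rw [shiftN_iterate_apply]; congr 1; omega
  simp only [mem_preimage, mem_setOf_eq, hfun]

lemma cylAlg_measurableSet {N n : ℕ} {B : Set (ℕ → Fin N)} (h : cylAlg n B) :
    MeasurableSet B := by
  obtain ⟨s, rfl⟩ := h
  have hs : MeasurableSet s := (Set.toFinite s).measurableSet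
  exact (measurable_pi_lambda _ fun i : Fin n => measurable_pi_apply (i : ℕ)) hs

lemma integrable_of_bounded01 {Ω : Type*} [MeasurableSpace Ω] (P : Measure Ω)
    [IsFiniteMeasure P] {f : Ω → ℝ} (hf : Measurable f) (h0 : ∀ ω, |f ω| ≤ 1) :
    Integrable f P :=
  (integrable_const (1 : ℝ)).mono' hf.aestronglyMeasurable (ae_of_all _ h0)

lemma toReal_prob_le_one {X : Type*} [MeasurableSpace X] (μ : Measure X)
    [IsProbabilityMeasure μ] (S : Set X) : (μ S).toReal ≤ 1 := by
  have h : μ S ≤ 1 := prob_le_one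
  calc (μ S).toReal ≤ (1 : ENNReal).toReal := ENNReal.toReal_mono (by simp) h
    _ = 1 := by simp

lemma measurableEmbedding_iterate {Ω : Type*} [MeasurableSpace Ω] (θ : Ω ≃ᵐ Ω) (p : ℕ) :
    MeasurableEmbedding ((⇑θ)^[p]) := by
  induction p with
  | zero => simpa using MeasurableEmbedding.id
  | succ n ih =>
      rw [Function.iterate_succ]
      exact ih.comp θ.measurableEmbedding

set_option maxHeartbeats 1000000 in
/-- Under hypotheses (I-a) and (II), for all `k, g ≥ 1`, indices
`i < j < i' < j'` with `j−i > g+k`, `i'−j > g+k`, `j'−i' > g+k`, and any two `k`-cylinders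
`C`, `C'`:
`∫_Ω μ_{θ^i ω}(C)·μ_{θ^j ω}(C)·μ_{θ^{i'} ω}(C')·μ_{θ^{j'} ω}(C') dℙ
  ≤ 2α(g)² + 6α(g) + μ(C)²·μ(C')²`. -/
theorem fourfold_product_bound
    {Ω : Type*} [MeasurableSpace Ω] {N : ℕ}
    (P : Measure Ω) [IsProbabilityMeasure P]
    (θ : Ω ≃ᵐ Ω) (hθ : Ergodic θ P)
    (κ : Kernel Ω (ℕ → Fin N)) [IsMarkovKernel κ]
    (hequiv : ∀ᵐ ω ∂P, ∀ i : ℕ, (κ ω).map (shiftN^[i]) = κ ((⇑θ)^[i] ω))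
    (αf : ℕ → ℝ)
    (hIa : ∀ n m g : ℕ, 1 ≤ n → 1 ≤ m → 1 ≤ g →
      ∀ As Bs : Set (ℕ → Fin N), cylAlg n As → cylAlg m Bs →
        |muBar P κ (As ∩ shiftN^[g + n] ⁻¹' Bs) - muBar P κ As * muBar P κ Bs| ≤ αf g)
    (hII : ∀ n m g : ℕ, 1 ≤ n → 1 ≤ m → 1 ≤ g →
      ∀ As Bs : Set (ℕ → Fin N), cylAlg n As → cylAlg m Bs →
        ∀ᵐ ω ∂P, |((κ ω) (As ∩ shiftN^[g + n] ⁻¹' Bs)).toReal -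
          ((κ ω) As).toReal * ((κ ((⇑θ)^[n + g] ω)) Bs).toReal| ≤ αf g)
    (k g : ℕ) (hk : 1 ≤ k) (hg : 1 ≤ g)
    (i j i' j' : ℕ) (hij : i < j) (hji' : j < i') (hi'j' : i' < j')
    (h1 : g + k < j - i) (h2 : g + k < i' - j) (h3 : g + k < j' - i')
    (w w' : Fin k → Fin N) :
    ∫ ω, ((κ ((⇑θ)^[i] ω)) (cyl k w)).toReal * ((κ ((⇑θ)^[j] ω)) (cyl k w)).toReal *
        ((κ ((⇑θ)^[i'] ω)) (cyl k w')).toReal * ((κ ((⇑θ)^[j'] ω)) (cyl k w')).toReal ∂P ≤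
      2 * αf g ^ 2 + 6 * αf g + (muBar P κ (cyl k w)) ^ 2 * (muBar P κ (cyl k w')) ^ 2 := by
  classical
  set C : Set (ℕ → Fin N) := cyl k w with hCdef
  set C' : Set (ℕ → Fin N) := cyl k w' with hC'def
  set a := j - i with hadef
  set b := i' - i with hbdef
  set c := j' - i with hcdef
  set A := αf g with hAdef
  -- basic nonnegativity of αf g
  have hA0 : 0 ≤ A :=
    le_trans (abs_nonneg _) (hIa k k g hk hk hg C C (cylAlg_cyl w le_rfl) (cylAlg_cyl w le_rfl))
  -- sets
  set D1 : Set (ℕ → Fin N) := C ∩ shiftN^[a] ⁻¹' C with hD1def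
  set Bset : Set (ℕ → Fin N) := C' ∩ shiftN^[c - b] ⁻¹' C' with hBsetdef
  set D : Set (ℕ → Fin N) := D1 ∩ shiftN^[b] ⁻¹' Bset with hDdef
  -- cylAlg facts
  have hD1ak : cylAlg (a + k) D1 :=
    cylAlg_inter (cylAlg_cyl w (by omega)) (cylAlg_shift a (cylAlg_cyl w le_rfl))
  have hD1alg : cylAlg (b - g) D1 := cylAlg_mono hD1ak (by omega)
  have hBalg : cylAlg ((c - b) + k) Bset :=
    cylAlg_inter (cylAlg_cyl w' (by omega)) (cylAlg_shift (c - b) (cylAlg_cyl w' le_rfl))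
  have hDalg : cylAlg (b + ((c - b) + k)) D :=
    cylAlg_inter (cylAlg_mono hD1ak (by omega)) (cylAlg_shift b hBalg)
  have mC : MeasurableSet C := cylAlg_measurableSet (cylAlg_cyl w le_rfl)
  have mC' : MeasurableSet C' := cylAlg_measurableSet (cylAlg_cyl w' le_rfl)
  have mD1 : MeasurableSet D1 := cylAlg_measurableSet hD1ak
  have mBset : MeasurableSet Bset := cylAlg_measurableSet hBalg
  have mD : MeasurableSet D := cylAlg_measurableSet hDalg
  -- measure preserving maps
  have hT : MeasurePreserving ((⇑θ)^[i]) P P := hθ.toMeasurePreserving.iterate i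
  have hT' : MeasurePreserving ((⇑θ)^[i']) P P := hθ.toMeasurePreserving.iterate i'
  -- hypothesis (II) instances
  have hAae := hII (a - g) k g (by omega) hk hg C C (cylAlg_cyl w (by omega)) (cylAlg_cyl w le_rfl)
  rw [show g + (a - g) = a by omega, show (a - g) + g = a by omega] at hAae
  have hAae' := hT.quasiMeasurePreserving.ae hAae
  have hBae := hII ((c - b) - g) k g (by omega) hk hg C' C'
    (cylAlg_cyl w' (by omega)) (cylAlg_cyl w' le_rfl)
  rw [show g + ((c - b) - g) = c - b by omega, show ((c - b) - g) + g = c - b by omega] at hBae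
  have hBae' := hT'.quasiMeasurePreserving.ae hBae
  have hCae := hII (b - g) ((c - b) + k) g (by omega) (by omega) hg D1 Bset hD1alg hBalg
  rw [show g + (b - g) = b by omega, show (b - g) + g = b by omega] at hCae
  have hCae' := hT.quasiMeasurePreserving.ae hCae
  -- pointwise a.e. bound
  have key : ∀ᵐ ω ∂P,
      ((κ ((⇑θ)^[i] ω)) C).toReal * ((κ ((⇑θ)^[j] ω)) C).toReal *
        ((κ ((⇑θ)^[i'] ω)) C').toReal * ((κ ((⇑θ)^[j'] ω)) C').toReal ≤
      ((κ ((⇑θ)^[i] ω)) D).toReal + (3 * A + A ^ 2) := by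
    filter_upwards [hAae', hBae', hCae'] with ω h₁ h₂ h₃
    rw [← Function.iterate_add_apply, show a + i = j by omega] at h₁
    rw [← Function.iterate_add_apply, show (c - b) + i' = j' by omega] at h₂
    rw [← Function.iterate_add_apply, show b + i = i' by omega] at h₃
    set u1 := ((κ ((⇑θ)^[i] ω)) C).toReal
    set u2 := ((κ ((⇑θ)^[j] ω)) C).toReal
    set u3 := ((κ ((⇑θ)^[i'] ω)) C').toReal
    set u4 := ((κ ((⇑θ)^[j'] ω)) C').toReal
    set v1 := ((κ ((⇑θ)^[i] ω)) D1).toReal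
    set w1 := ((κ ((⇑θ)^[i'] ω)) Bset).toReal
    set v := ((κ ((⇑θ)^[i] ω)) D).toReal
    have hu1 : 0 ≤ u1 := ENNReal.toReal_nonneg
    have hu2 : 0 ≤ u2 := ENNReal.toReal_nonneg
    have hu3 : 0 ≤ u3 := ENNReal.toReal_nonneg
    have hu4 : 0 ≤ u4 := ENNReal.toReal_nonneg
    have hv1 : 0 ≤ v1 := ENNReal.toReal_nonneg
    have hw1 : 0 ≤ w1 := ENNReal.toReal_nonneg
    have hv1' : v1 ≤ 1 := toReal_prob_le_one _ _
    have hw1' : w1 ≤ 1 := toReal_prob_le_one _ _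
    obtain ⟨h₁l, h₁r⟩ := abs_le.mp h₁
    obtain ⟨h₂l, h₂r⟩ := abs_le.mp h₂
    obtain ⟨h₃l, h₃r⟩ := abs_le.mp h₃
    have p1 : u1 * u2 ≤ v1 + A := by linarith
    have p2 : u3 * u4 ≤ w1 + A := by linarith
    have p3 : v1 * w1 ≤ v + A := by linarith
    have q : (u1 * u2) * (u3 * u4) ≤ (v1 + A) * (w1 + A) :=
      mul_le_mul p1 p2 (mul_nonneg hu3 hu4) (by linarith)
    nlinarith [q, p3, mul_nonneg hA0 hv1, mul_nonneg hA0 hw1]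
  -- measurability of the building blocks
  have mκ : ∀ (p : ℕ) (S : Set (ℕ → Fin N)), MeasurableSet S →
      Measurable fun ω => ((κ ((⇑θ)^[p] ω)) S).toReal := fun p S hS =>
    ((κ.measurable_coe hS).comp (θ.measurable.iterate p)).ennreal_toReal
  have hFle : ∀ (p : ℕ) (S : Set (ℕ → Fin N)) (ω : Ω),
      ((κ ((⇑θ)^[p] ω)) S).toReal ≤ 1 := fun p S ω => toReal_prob_le_one _ _
  have intF : Integrable (fun ω =>
      ((κ ((⇑θ)^[i] ω)) C).toReal * ((κ ((⇑θ)^[j] ω)) C).toReal *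
        ((κ ((⇑θ)^[i'] ω)) C').toReal * ((κ ((⇑θ)^[j'] ω)) C').toReal) P := by
    apply integrable_of_bounded01 P
    · exact (((mκ i C mC).mul (mκ j C mC)).mul (mκ i' C' mC')).mul (mκ j' C' mC')
    · intro ω
      rw [abs_of_nonneg (by positivity)]
      exact mul_le_one₀ (mul_le_one₀ (mul_le_one₀ (hFle i C ω) ENNReal.toReal_nonneg
        (hFle j C ω)) ENNReal.toReal_nonneg (hFle i' C' ω)) ENNReal.toReal_nonneg (hFle j' C' ω)
  have intD : Integrable (fun ω => ((κ ((⇑θ)^[i] ω)) D).toReal) P := by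
    apply integrable_of_bounded01 P (mκ i D mD)
    intro ω; rw [abs_of_nonneg ENNReal.toReal_nonneg]; exact hFle i D ω
  have intG : Integrable (fun ω => ((κ ((⇑θ)^[i] ω)) D).toReal + (3 * A + A ^ 2)) P :=
    intD.add (integrable_const _)
  have step1 := integral_mono_ae intF intG key
  have hemb : MeasurableEmbedding ((⇑θ)^[i]) := measurableEmbedding_iterate θ i
  have hint : ∫ ω, ((κ ((⇑θ)^[i] ω)) D).toReal ∂P = muBar P κ D :=
    hT.integral_comp hemb (fun ω => ((κ ω) D).toReal)
  rw [integral_add intD (integrable_const _), integral_const, probReal_univ, hint] at step1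
  simp only [ENNReal.toReal_one, one_smul, smul_eq_mul] at step1
  -- bound muBar P κ D
  have hd := hIa (b - g) ((c - b) + k) g (by omega) (by omega) hg D1 Bset hD1alg hBalg
  rw [show g + (b - g) = b by omega] at hd
  have hd1 := hIa (a - g) k g (by omega) hk hg C C (cylAlg_cyl w (by omega)) (cylAlg_cyl w le_rfl)
  rw [show g + (a - g) = a by omega] at hd1
  have hb1 := hIa ((c - b) - g) k g (by omega) hk hg C' C'
    (cylAlg_cyl w' (by omega)) (cylAlg_cyl w' le_rfl)
  rw [show g + ((c - b) - g) = c - b by omega] at hb1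
  -- muBar bounds
  have muNonneg : ∀ S : Set (ℕ → Fin N), 0 ≤ muBar P κ S := fun S =>
    integral_nonneg fun ω => ENNReal.toReal_nonneg
  have muLeOne : ∀ S : Set (ℕ → Fin N), MeasurableSet S → muBar P κ S ≤ 1 := by
    intro S hS
    have : muBar P κ S ≤ ∫ _ω, (1 : ℝ) ∂P := by
      apply integral_mono _ (integrable_const _) (fun ω => toReal_prob_le_one _ _)
      apply integrable_of_bounded01 P ((κ.measurable_coe hS).ennreal_toReal)
      intro ω; rw [abs_of_nonneg ENNReal.toReal_nonneg]; exact toReal_prob_le_one _ _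
    simpa using this
  obtain ⟨hdl, hdr⟩ := abs_le.mp hd
  obtain ⟨hd1l, hd1r⟩ := abs_le.mp hd1
  obtain ⟨hb1l, hb1r⟩ := abs_le.mp hb1
  have hx0 := muNonneg C
  have hy0 := muNonneg C'
  have hx1 := muLeOne C mC
  have hy1 := muLeOne C' mC'
  have hD10 := muNonneg D1
  have hB0 := muNonneg Bset
  have q1 : muBar P κ D1 ≤ muBar P κ C * muBar P κ C + A := by linarith
  have q2 : muBar P κ Bset ≤ muBar P κ C' * muBar P κ C' + A := by linarith
  have q3 : muBar P κ D1 * muBar P κ Bset ≤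
      (muBar P κ C * muBar P κ C + A) * (muBar P κ C' * muBar P κ C' + A) :=
    mul_le_mul q1 q2 hB0 (by nlinarith)
  nlinarith [step1, hdl, hdr, q3, mul_nonneg hA0 (mul_nonneg hx0 hx0),
    mul_nonneg hA0 (mul_nonneg hy0 hy0), mul_le_one₀ hx1 hx0 hx1, mul_le_one₀ hy1 hy0 hy1,
    mul_nonneg hA0 hA0]
end
end
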